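/- Let g_a and g_b both satisfy Assumption 2 with g_a(k) ≤ g_b(k) for all k ≥ 1, and let p*_a, p*_b denote the unique fixed points in [u0, v0] of the operators T_a, T_b obtained by using g_a and g_b respectively in the definition of T (with the same c and δ). Then p*_a(s) ≤ p*_b(s) for all s ∈ [0,1]. -/

import Mathlib

open Set Filter
open Topology

noncomputable def Tmap (c : ℝ → ℝ) (g : ℕ → ℝ) (δ : ℝ) (p : ℝ → ℝ) (s : ℝ) : ℝ :=
  sInf {y : ℝ | ∃ k : ℕ, ∃ t : ℝ, 1 ≤ k ∧ 0 ≤ t ∧ t ≤ s ∧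
    y = c (s - t) + g k + δ * k * p (t / k)}

lemma Tset_nonneg (c : ℝ → ℝ) (g : ℕ → ℝ) (δ : ℝ) (p : ℝ → ℝ) (s : ℝ)
    (hs : s ∈ Set.Icc (0:ℝ) 1) (hc : ∀ x ∈ Set.Icc (0:ℝ) 1, 0 ≤ c x)
    (hg : ∀ k : ℕ, 1 ≤ k → 0 ≤ g k) (hp : ∀ x ∈ Set.Icc (0:ℝ) 1, 0 ≤ p x)
    (hδ : 0 ≤ δ) :
    ∀ y ∈ {y : ℝ | ∃ k : ℕ, ∃ t : ℝ, 1 ≤ k ∧ 0 ≤ t ∧ t ≤ s ∧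
      y = c (s - t) + g k + δ * k * p (t / k)}, (0:ℝ) ≤ y := by
  rintro y ⟨k, t, hk, ht0, hts, rfl⟩
  have hk' : (1:ℝ) ≤ (k:ℝ) := by exact_mod_cast hk
  have htk0 : 0 ≤ t / k := div_nonneg ht0 (by linarith)
  have htk1 : t / k ≤ 1 := by
    have h := div_le_self ht0 hk'
    linarith [hs.2]
  have h1 : 0 ≤ c (s - t) := hc _ ⟨by linarith, by linarith [hs.2]⟩
  have h2 : 0 ≤ g k := hg k hk
  have h3 : 0 ≤ δ * k * p (t / k) :=
    mul_nonneg (mul_nonneg hδ (by linarith)) (hp _ ⟨htk0, htk1⟩)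
  linarith

set_option maxHeartbeats 1000000

theorem price_monotone_in_g (c : ℝ → ℝ) (ga gb : ℕ → ℝ) (δ : ℝ)
    (hc_diff : DifferentiableOn ℝ c (Set.Icc 0 1))
    (hc_mono : StrictMonoOn c (Set.Icc 0 1))
    (hc_conv : StrictConvexOn ℝ (Set.Icc 0 1) c)
    (hc0 : c 0 = 0) (hc'0 : 0 < deriv c 0)
    (hga_mono : StrictMonoOn ga {k : ℕ | 1 ≤ k})
    (hga1 : ga 1 = 0) (hga_nonneg : ∀ k : ℕ, 1 ≤ k → 0 ≤ ga k)
    (hga_top : Tendsto ga atTop atTop)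
    (hgb_mono : StrictMonoOn gb {k : ℕ | 1 ≤ k})
    (hgb1 : gb 1 = 0) (hgb_nonneg : ∀ k : ℕ, 1 ≤ k → 0 ≤ gb k)
    (hgb_top : Tendsto gb atTop atTop)
    (hgab : ∀ k : ℕ, 1 ≤ k → ga k ≤ gb k)
    (hδ : 1 < δ)
    (pa pb : ℝ → ℝ)
    (hpa_cont : ContinuousOn pa (Set.Icc 0 1))
    (hpa_mem : ∀ s ∈ Set.Icc (0 : ℝ) 1, deriv c 0 * s ≤ pa s ∧ pa s ≤ c s)
    (hpa_fix : ∀ s ∈ Set.Icc (0 : ℝ) 1, Tmap c ga δ pa s = pa s)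
    (hpb_cont : ContinuousOn pb (Set.Icc 0 1))
    (hpb_mem : ∀ s ∈ Set.Icc (0 : ℝ) 1, deriv c 0 * s ≤ pb s ∧ pb s ≤ c s)
    (hpb_fix : ∀ s ∈ Set.Icc (0 : ℝ) 1, Tmap c gb δ pb s = pb s) :
    ∀ s ∈ Set.Icc (0 : ℝ) 1, pa s ≤ pb s := by
  set c' : ℝ := deriv c 0 with hc'def
  have hδ0 : (0:ℝ) < δ := by linarith
  -- basic facts
  have hcnn : ∀ x ∈ Set.Icc (0:ℝ) 1, 0 ≤ c x := by
    intro x hx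
    rcases eq_or_lt_of_le hx.1 with h | h
    · rw [← h, hc0]
    · rw [← hc0]
      exact le_of_lt (hc_mono ⟨le_rfl, zero_le_one⟩ hx h)
  have hcmon : MonotoneOn c (Set.Icc (0:ℝ) 1) := hc_mono.monotoneOn
  have hpa0 : pa 0 = 0 := by
    have h := hpa_mem 0 ⟨le_rfl, zero_le_one⟩
    have h1 : (0:ℝ) ≤ pa 0 := by simpa using h.1
    have h2 : pa 0 ≤ 0 := by simpa [hc0] using h.2
    linarith
  have hpb0 : pb 0 = 0 := by
    have h := hpb_mem 0 ⟨le_rfl, zero_le_one⟩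
    have h1 : (0:ℝ) ≤ pb 0 := by simpa using h.1
    have h2 : pb 0 ≤ 0 := by simpa [hc0] using h.2
    linarith
  have hpann : ∀ x ∈ Set.Icc (0:ℝ) 1, 0 ≤ pa x := by
    intro x hx
    have h1 := (hpa_mem x hx).1
    have h2 : 0 ≤ c' * x := mul_nonneg hc'0.le hx.1
    linarith
  have hpbnn : ∀ x ∈ Set.Icc (0:ℝ) 1, 0 ≤ pb x := by
    intro x hx
    have h1 := (hpb_mem x hx).1
    have h2 : 0 ≤ c' * x := mul_nonneg hc'0.le hx.1
    linarith
  have hpbpos : ∀ x ∈ Set.Ioc (0:ℝ) 1, 0 < pb x := by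
    intro x hx
    have h1 := (hpb_mem x ⟨hx.1.le, hx.2⟩).1
    have h2 : 0 < c' * x := mul_pos hc'0 hx.1
    linarith
  by_contra hcon
  push_neg at hcon
  obtain ⟨s0, hs0, hlt0⟩ := hcon
  have hs0pos : 0 < s0 := by
    rcases eq_or_lt_of_le hs0.1 with h | h
    · exfalso; rw [← h, hpa0, hpb0] at hlt0; exact lt_irrefl 0 hlt0
    · exact h
  have hpbs0 : 0 < pb s0 := hpbpos s0 ⟨hs0pos, hs0.2⟩
  set r0 : ℝ := pa s0 / pb s0 with hr0def
  have hr0 : 1 < r0 := (one_lt_div hpbs0).2 hlt0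
  set lam0 : ℝ := (1 + r0) / 2 with hlam0def
  have hlam0gt : 1 < lam0 := by rw [hlam0def]; linarith
  have hlam0lt : lam0 < r0 := by rw [hlam0def]; linarith
  -- differentiability at 0 and slope bound
  have hdiff0 : DifferentiableAt ℝ c 0 := by
    by_contra h
    rw [hc'def, deriv_zero_of_not_differentiableAt h] at hc'0
    exact lt_irrefl 0 hc'0
  have hder : HasDerivAt c c' 0 := hdiff0.hasDerivAt
  have hsl : Tendsto (slope c 0) (𝓝[≠] 0) (𝓝 c') :=
    hasDerivAt_iff_tendsto_slope.1 hder
  have hlt' : c' < lam0 * c' := by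
    have := mul_lt_mul_of_pos_right hlam0gt hc'0
    linarith
  have hev : slope c 0 ⁻¹' Set.Iio (lam0 * c') ∈ 𝓝[≠] (0:ℝ) :=
    hsl (Iio_mem_nhds hlt')
  have hev' : slope c 0 ⁻¹' Set.Iio (lam0 * c') ∈ 𝓝[>] (0:ℝ) := by
    refine nhdsWithin_mono 0 ?_ hev
    intro x hx
    exact ne_of_gt hx
  obtain ⟨u, hu, huss⟩ := mem_nhdsGT_iff_exists_Ioo_subset.1 hev'
  have hupos : (0:ℝ) < u := hu
  set a : ℝ := min (u / 2) s0 with hadef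
  have hapos : 0 < a := lt_min (by linarith) hs0pos
  have has0 : a ≤ s0 := min_le_right _ _
  have ha1 : a ≤ 1 := le_trans has0 hs0.2
  have hcx : ∀ x : ℝ, 0 < x → x < a → c x < lam0 * c' * x := by
    intro x hx0 hxa
    have hxu : x < u := by
      have : a ≤ u / 2 := min_le_left _ _
      linarith
    have := huss ⟨hx0, hxu⟩
    simp only [Set.mem_preimage, Set.mem_Iio] at this
    have hslope : slope c 0 x = c x / x := by
      rw [slope_def_field, hc0]; ring_nf
    rw [hslope] at this
    exact (div_lt_iff₀ hx0).1 this
  -- maximum of the ratio on [a, 1]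
  have hsub : Set.Icc a 1 ⊆ Set.Icc (0:ℝ) 1 := Set.Icc_subset_Icc hapos.le le_rfl
  have hfcont : ContinuousOn (fun x => pa x / pb x) (Set.Icc a 1) := by
    refine ContinuousOn.div (hpa_cont.mono hsub) (hpb_cont.mono hsub) ?_
    intro x hx
    exact ne_of_gt (hpbpos x ⟨lt_of_lt_of_le hapos hx.1, hx.2⟩)
  obtain ⟨sm, hsmmem, hsmmax⟩ :=
    isCompact_Icc.exists_isMaxOn (Set.nonempty_Icc.2 ha1) hfcont
  set lam : ℝ := pa sm / pb sm with hlamdef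
  have hsmpos : 0 < sm := lt_of_lt_of_le hapos hsmmem.1
  have hsmIcc : sm ∈ Set.Icc (0:ℝ) 1 := ⟨hsmpos.le, hsmmem.2⟩
  set B : ℝ := pb sm with hBdef
  have hB : 0 < B := hpbpos sm ⟨hsmpos, hsmmem.2⟩
  have hr0lam : r0 ≤ lam := hsmmax ⟨has0, hs0.2⟩
  have hlam1 : 1 < lam := lt_of_lt_of_le hr0 hr0lam
  have hlampos : 0 < lam := by linarith
  have hpasm : pa sm = lam * B := by
    rw [hlamdef, hBdef]
    exact (div_mul_cancel₀ (pa sm) hB.ne').symm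
  -- key: pa ≤ lam * pb on [0,1]
  have hkey : ∀ x ∈ Set.Icc (0:ℝ) 1, pa x ≤ lam * pb x := by
    intro x hx
    rcases eq_or_lt_of_le hx.1 with h | hx0
    · rw [← h, hpa0, hpb0]; simp
    rcases lt_or_ge x a with hxa | hax
    · have h1 : pa x ≤ c x := (hpa_mem x hx).2
      have h2 : c x < lam0 * c' * x := hcx x hx0 hxa
      have h3 : c' * x ≤ pb x := (hpb_mem x hx).1
      have hlam0lam : lam0 ≤ lam := by linarith
      have hpbx : 0 ≤ pb x := hpbnn x hx
      have h4 : lam0 * (c' * x) ≤ lam0 * pb x :=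
        mul_le_mul_of_nonneg_left h3 (by linarith)
      have h5 : lam0 * pb x ≤ lam * pb x :=
        mul_le_mul_of_nonneg_right hlam0lam hpbx
      have h6 : lam0 * c' * x = lam0 * (c' * x) := by ring
      linarith
    · have hmem : x ∈ Set.Icc a 1 := ⟨hax, hx.2⟩
      have h : pa x / pb x ≤ pa sm / pb sm := hsmmax hmem
      have hpbx : 0 < pb x := hpbpos x ⟨hx0, hx.2⟩
      rw [← hBdef, div_le_div_iff₀ hpbx hB] at h
      calc pa x ≤ pa sm / B * pb x := by
            rw [div_mul_eq_mul_div, le_div_iff₀ hB]; linarith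
        _ = lam * pb x := by rw [hpasm]; field_simp
  -- continuity of pb at sm
  have hεc : (0:ℝ) < (δ - 1) * B / (2 * δ) := by
    apply div_pos (mul_pos (by linarith) hB); positivity
  obtain ⟨η, hηpos, hη⟩ :=
    Metric.continuousWithinAt_iff.1 (hpb_cont sm hsmIcc) _ hεc
  set η' : ℝ := min η sm with hη'def
  have hη'pos : 0 < η' := lt_min hηpos hsmpos
  have hη'1 : η' ≤ 1 := le_trans (min_le_right _ _) hsmmem.2
  have hcη' : 0 < c η' := by
    rw [← hc0]
    exact hc_mono ⟨le_rfl, zero_le_one⟩ ⟨hη'pos.le, hη'1⟩ hη'pos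
  have hgb2 : 0 < gb 2 := by
    rw [← hgb1]
    exact hgb_mono (by norm_num) (by norm_num) (by norm_num)
  set m : ℝ := min (gb 2) (c η') with hmdef
  have hm : 0 < m := lt_min hgb2 hcη'
  set ε : ℝ := min ((lam - 1) / lam * m / 2) ((δ - 1) * B / 4) with hεdef
  have hε : 0 < ε := by
    apply lt_min
    · exact div_pos (mul_pos (div_pos (by linarith) hlampos) hm) two_pos
    · exact div_pos (mul_pos (by linarith) hB) (by norm_num)
  -- near-optimal element for pb at sm
  have hfixb := hpb_fix sm hsmIcc
  simp only [Tmap] at hfixb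
  have hSbnn := Tset_nonneg c gb δ pb sm hsmIcc hcnn hgb_nonneg hpbnn hδ0.le
  have hSbbd : BddBelow {y : ℝ | ∃ k : ℕ, ∃ t : ℝ, 1 ≤ k ∧ 0 ≤ t ∧ t ≤ sm ∧
      y = c (sm - t) + gb k + δ * k * pb (t / k)} := ⟨0, hSbnn⟩
  have hSbne : Set.Nonempty {y : ℝ | ∃ k : ℕ, ∃ t : ℝ, 1 ≤ k ∧ 0 ≤ t ∧ t ≤ sm ∧
      y = c (sm - t) + gb k + δ * k * pb (t / k)} :=
    ⟨c (sm - 0) + gb 1 + δ * (1:ℕ) * pb (0 / (1:ℕ)), 1, 0, le_rfl, le_rfl, hsmpos.le, rfl⟩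
  have hinflt : sInf {y : ℝ | ∃ k : ℕ, ∃ t : ℝ, 1 ≤ k ∧ 0 ≤ t ∧ t ≤ sm ∧
      y = c (sm - t) + gb k + δ * k * pb (t / k)} < B + ε := by
    rw [hfixb]; linarith
  obtain ⟨y, hymem, hylt⟩ := (csInf_lt_iff hSbbd hSbne).1 hinflt
  obtain ⟨k, t, hk, ht0, hts, rfl⟩ := hymem
  have hk' : (1:ℝ) ≤ (k:ℝ) := by exact_mod_cast hk
  have htk0 : 0 ≤ t / k := div_nonneg ht0 (by linarith)
  have htk1 : t / k ≤ 1 := by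
    have h := div_le_self ht0 hk'
    linarith [hsmmem.2]
  have htkIcc : (t / k) ∈ Set.Icc (0:ℝ) 1 := ⟨htk0, htk1⟩
  set C : ℝ := c (sm - t) with hCdef
  set G : ℝ := gb k with hGdef
  set P : ℝ := pb (t / k) with hPdef
  have hCnn : 0 ≤ C :=
    hcnn _ ⟨by linarith, by linarith [hsmmem.2]⟩
  have hGnn : 0 ≤ G := hgb_nonneg k hk
  have hPnn : 0 ≤ P := hpbnn _ htkIcc
  -- pa sm is bounded by corresponding element
  have hfixa := hpa_fix sm hsmIcc
  simp only [Tmap] at hfixa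
  have hSann := Tset_nonneg c ga δ pa sm hsmIcc hcnn hga_nonneg hpann hδ0.le
  have hpale : pa sm ≤ C + ga k + δ * k * pa (t / k) := by
    rw [← hfixa]
    exact csInf_le ⟨0, hSann⟩ ⟨k, t, hk, ht0, hts, rfl⟩
  have h1 : lam * B ≤ C + G + δ * k * (lam * P) := by
    have h2 : pa (t / k) ≤ lam * P := hkey _ htkIcc
    have h3 : ga k ≤ G := hgab k hk
    have h4 : δ * k * pa (t / k) ≤ δ * k * (lam * P) := by
      apply mul_le_mul_of_nonneg_left h2
      positivity
    rw [hpasm] at hpale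
    linarith
  have h2 : C + G + δ * k * P < B + ε := hylt
  have hCG : (lam - 1) * (C + G) < lam * ε := by
    have h2' : lam * (C + G + δ * (k:ℝ) * P) < lam * (B + ε) :=
      mul_lt_mul_of_pos_left h2 hlampos
    have e1 : lam * (C + G + δ * (k:ℝ) * P) = lam * C + lam * G + δ * (k:ℝ) * (lam * P) := by
      ring
    have e2 : lam * (B + ε) = lam * B + lam * ε := by ring
    rw [e1, e2] at h2'
    linarith
  have hCGm : C + G < m / 2 := by
    have hεle : ε ≤ (lam - 1) / lam * m / 2 := min_le_left _ _
    have heq : lam * ((lam - 1) / lam * m / 2) = (lam - 1) * (m / 2) := by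
      field_simp
    have : (lam - 1) * (C + G) < (lam - 1) * (m / 2) := by
      calc (lam - 1) * (C + G) < lam * ε := hCG
        _ ≤ lam * ((lam - 1) / lam * m / 2) := by
            exact mul_le_mul_of_nonneg_left hεle hlampos.le
        _ = (lam - 1) * (m / 2) := heq
    exact lt_of_mul_lt_mul_left this (by linarith)
  -- k = 1
  have hk1 : k = 1 := by
    by_contra hne
    have hk2 : 2 ≤ k := by omega
    have : gb 2 ≤ G := by
      rcases eq_or_lt_of_le hk2 with h | h
      · rw [hGdef, ← h]
      · exact le_of_lt (hgb_mono (by norm_num) hk h)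
    have hmle : m ≤ gb 2 := min_le_left _ _
    linarith
  -- t close to sm
  have hCsmall : C < c η' := by
    have : m ≤ c η' := min_le_right _ _
    linarith
  have htclose : sm - t < η' := by
    by_contra hge
    push_neg at hge
    have : c η' ≤ C := hcmon ⟨hη'pos.le, hη'1⟩
      ⟨by linarith, by linarith [hsmmem.2]⟩ hge
    linarith
  -- final contradiction
  subst hk1
  have htdiv : t / ((1:ℕ):ℝ) = t := by norm_num
  have htIcc : t ∈ Set.Icc (0:ℝ) 1 := ⟨ht0, le_trans hts hsmmem.2⟩
  have hdist : dist t sm < η := by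
    rw [Real.dist_eq, abs_of_nonpos (by linarith)]
    have : η' ≤ η := min_le_left _ _
    linarith
  have hpbt := hη htIcc hdist
  rw [Real.dist_eq] at hpbt
  have hpbtlow : B - (δ - 1) * B / (2 * δ) < pb t := by
    have := abs_lt.1 hpbt
    rw [hBdef]
    linarith [this.1]
  have hymin : δ * pb t ≤ C + G + δ * (1:ℕ) * P := by
    rw [hGdef, hgb1, hPdef, htdiv]
    push_cast
    linarith
  have hεle2 : ε ≤ (δ - 1) * B / 4 := min_le_right _ _
  have hmul : δ * ((δ - 1) * B / (2 * δ)) = (δ - 1) * B / 2 := by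
    field_simp
  have hfinal : B + ε < δ * pb t := by
    have h5 : δ * (B - (δ - 1) * B / (2 * δ)) < δ * pb t :=
      mul_lt_mul_of_pos_left hpbtlow hδ0
    rw [mul_sub, hmul] at h5
    have hd1B : 0 ≤ (δ - 1) * B := mul_nonneg (by linarith) hB.le
    linarith
  linarith
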